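/- Let n ≥ 3 and k ∈ ℕ. There is a constant C > 0, depending only on n and k, such that for all z = (x,y) ∈ ℝ × ℝ^{n-1} with z ≠ 0 and all y' ∈ ℝ^{n-1} with 2|z| ≤ |y'|, writing z' = (0,y') ∈ ℝⁿ, one has | x|z−z'|^{−n} − Σ_{m=1}^{k} x |z|^{m−1} |z'|^{−(m+n−1)} C_{m−1}^{n/2}(⟨z,z'⟩/(|z||z'|)) | ≤ C |x| |z|^{k} |z'|^{−(n+k)}. (Growth estimate for the modified double layer kernel: removing the first k terms of the harmonic-polynomial expansion improves the decay at infinity in z' by k orders.) -/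

import Mathlib

open MeasureTheory Real Filter
open scoped RealInnerProductSpace

/-- The Gegenbauer (ultraspherical) polynomial
`C_m^λ(u) = Σ_{k=0}^{⌊m/2⌋} (−1)^k (Γ(λ+m−k)/(Γ(λ) k! (m−2k)!)) (2u)^{m−2k}`. -/
noncomputable def gegenbauer (lam : ℝ) (m : ℕ) (u : ℝ) : ℝ :=
  ∑ k ∈ Finset.range (m / 2 + 1),
    (-1 : ℝ) ^ k *
      (Real.Gamma (lam + m - k) /
        (Real.Gamma lam * (Nat.factorial k : ℝ) * (Nat.factorial (m - 2 * k) : ℝ))) *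
      (2 * u) ^ (m - 2 * k)


section GegenbauerAux

open Filter Finset Set

noncomputable def binCoef (lam : ℝ) (k : ℕ) : ℝ :=
  Real.Gamma (lam + k) / (Real.Gamma lam * (Nat.factorial k : ℝ))

lemma binCoef_pos {lam : ℝ} (hlam : 0 < lam) (k : ℕ) : 0 < binCoef lam k := by
  apply div_pos (Real.Gamma_pos_of_pos (by positivity))
  exact mul_pos (Real.Gamma_pos_of_pos hlam) (by exact_mod_cast k.factorial_pos)

lemma binCoef_zero {lam : ℝ} (hlam : 0 < lam) : binCoef lam 0 = 1 := by
  have h : Real.Gamma lam ≠ 0 := (Real.Gamma_pos_of_pos hlam).ne'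
  simp [binCoef, div_self h]

lemma binCoef_succ {lam : ℝ} (hlam : 0 < lam) (k : ℕ) :
    (k + 1 : ℝ) * binCoef lam (k + 1) = (lam + k) * binCoef lam k := by
  have h2 : Real.Gamma (lam + ((k:ℕ)+1 : ℕ)) = (lam + k) * Real.Gamma (lam + k) := by
    have h1 : lam + ((k:ℕ)+1 : ℕ) = (lam + k) + 1 := by push_cast; ring
    rw [h1, Real.Gamma_add_one (by positivity)]
  have h3 : ((k+1).factorial : ℝ) = (k+1) * (k.factorial : ℝ) := by
    rw [Nat.factorial_succ]; push_cast; ring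
  have hG : Real.Gamma lam ≠ 0 := (Real.Gamma_pos_of_pos hlam).ne'
  have hf : (k.factorial : ℝ) ≠ 0 := by exact_mod_cast k.factorial_pos.ne'
  rw [binCoef, binCoef, h2, h3]
  field_simp

lemma binCoef_succ' {lam : ℝ} (hlam : 0 < lam) (k : ℕ) :
    binCoef lam (k + 1) = (lam + k) / (k + 1) * binCoef lam k := by
  have h := binCoef_succ hlam k
  field_simp
  linarith [h]

/-- Summability of `(k+1) * binCoef lam k * r^k` for `|r| < 1`. -/
lemma binCoef_summable_aux {lam : ℝ} (hlam : 0 < lam) {r : ℝ} (hr : |r| < 1) :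
    Summable (fun k : ℕ => ((k : ℝ) + 1) * binCoef lam k * r ^ k) := by
  set r' : ℝ := (1 + |r|) / 2 with hr'def
  have hr'1 : r' < 1 := by simp only [hr'def]; linarith
  have hrr' : |r| < r' := by simp only [hr'def]; linarith
  -- the ratio tends to |r|
  have hlim0 : Tendsto (fun n : ℕ => 1 / ((n : ℝ) + 1)) atTop (nhds 0) :=
    tendsto_one_div_add_atTop_nhds_zero_nat
  have hlim : Tendsto
      (fun k : ℕ => (1 + 1 / ((k:ℝ) + 1)) * (1 + (lam - 1) * (1 / ((k:ℝ) + 1))) * |r|)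
      atTop (nhds ((1 + 0) * (1 + (lam - 1) * 0) * |r|)) := by
    exact (((hlim0.const_add 1)).mul ((hlim0.const_mul (lam - 1)).const_add 1)).mul
      tendsto_const_nhds
  have hlim' : Tendsto
      (fun k : ℕ => (1 + 1 / ((k:ℝ) + 1)) * (1 + (lam - 1) * (1 / ((k:ℝ) + 1))) * |r|)
      atTop (nhds |r|) := by simpa using hlim
  have hev : ∀ᶠ k : ℕ in atTop,
      (1 + 1 / ((k:ℝ) + 1)) * (1 + (lam - 1) * (1 / ((k:ℝ) + 1))) * |r| ≤ r' :=
    hlim'.eventually_le_const hrr'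
  apply summable_of_ratio_norm_eventually_le hr'1
  filter_upwards [hev] with k hk
  have hk1 : (0:ℝ) < (k:ℝ) + 1 := by positivity
  have hb := binCoef_pos hlam k
  have hb' := binCoef_pos hlam (k+1)
  have key : (1 + 1 / ((k:ℝ) + 1)) * (1 + (lam - 1) * (1 / ((k:ℝ) + 1))) =
      ((k:ℝ) + 2) * (lam + k) / (((k:ℝ) + 1) * ((k:ℝ) + 1)) := by
    field_simp; ring
  have hnorm1 : ‖((k:ℝ) + 1 + 1) * binCoef lam (k+1) * r ^ (k+1)‖ =
      ((k:ℝ) + 2) * (lam + k) / ((k:ℝ) + 1) * binCoef lam k * (|r| ^ k * |r|) := by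
    rw [binCoef_succ' hlam k]
    rw [Real.norm_eq_abs, abs_mul, abs_mul, abs_pow, pow_succ, abs_mul]
    rw [abs_of_pos (by positivity : (0:ℝ) < (k:ℝ)+1+1),
      abs_of_pos (div_pos (by positivity : (0:ℝ) < lam + k) hk1), abs_of_pos hb]
    ring
  have hnorm2 : ‖((k:ℝ) + 1) * binCoef lam k * r ^ k‖ = ((k:ℝ) + 1) * binCoef lam k * |r| ^ k := by
    rw [Real.norm_eq_abs, abs_mul, abs_mul, abs_pow,
      abs_of_pos hk1, abs_of_pos hb]
  push_cast
  rw [hnorm1, hnorm2]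
  calc ((k:ℝ) + 2) * (lam + k) / ((k:ℝ) + 1) * binCoef lam k * (|r| ^ k * |r|)
      = ((1 + 1 / ((k:ℝ) + 1)) * (1 + (lam - 1) * (1 / ((k:ℝ) + 1))) * |r|) *
        (((k:ℝ) + 1) * binCoef lam k * |r| ^ k) := by rw [key]; field_simp
    _ ≤ r' * (((k:ℝ) + 1) * binCoef lam k * |r| ^ k) := by
        apply mul_le_mul_of_nonneg_right hk; positivity

lemma binCoef_summable {lam : ℝ} (hlam : 0 < lam) {r : ℝ} (hr : |r| < 1) :
    Summable (fun k : ℕ => binCoef lam k * r ^ k) := by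
  apply Summable.of_norm_bounded (binCoef_summable_aux hlam (r := |r|) (by rwa [abs_abs]))
  intro k
  have hb := binCoef_pos hlam k
  rw [Real.norm_eq_abs, abs_mul, abs_pow, abs_of_pos hb]
  have h1 : (0:ℝ) ≤ |r| ^ k := by positivity
  nlinarith [mul_nonneg (mul_nonneg (Nat.cast_nonneg k : (0:ℝ) ≤ (k:ℝ)) hb.le) h1]

lemma binCoef_summable_mul {lam : ℝ} (hlam : 0 < lam) {r : ℝ} (hr : |r| < 1) :
    Summable (fun k : ℕ => (k : ℝ) * binCoef lam k * r ^ k) := by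
  apply Summable.of_norm_bounded (binCoef_summable_aux hlam (r := |r|) (by rwa [abs_abs]))
  intro k
  have hb := binCoef_pos hlam k
  rw [Real.norm_eq_abs, abs_mul, abs_mul, abs_pow, abs_of_pos hb,
    abs_of_nonneg (Nat.cast_nonneg k : (0:ℝ) ≤ (k:ℝ))]
  have h1 : (0:ℝ) ≤ |r| ^ k := by positivity
  nlinarith

/-- The binomial series: `(1-s)^(-lam) = ∑ binCoef lam k * s^k` for `|s| < 1`. -/
theorem binCoef_hasSum {lam : ℝ} (hlam : 0 < lam) {s : ℝ} (hs : |s| < 1) :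
    HasSum (fun k : ℕ => binCoef lam k * s ^ k) ((1 - s) ^ (-lam)) := by
  set ρ : ℝ := (1 + |s|) / 2 with hρdef
  have hρ1 : ρ < 1 := by simp only [hρdef]; linarith
  have hsρ : |s| < ρ := by simp only [hρdef]; linarith
  have hρ0 : 0 < ρ := lt_of_le_of_lt (abs_nonneg s) hsρ
  set S : ℝ → ℝ := fun z => ∑' k : ℕ, binCoef lam k * z ^ k with hSdef
  -- summable bound for the derivatives
  set u : ℕ → ℝ := fun k => (k : ℝ) * binCoef lam k * ρ ^ (k - 1) with hudef
  have hu : Summable u := by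
    apply Summable.of_nonneg_of_le
      (fun k => by
        have := binCoef_pos hlam k
        positivity)
      (fun k => ?_)
      (((binCoef_summable_aux hlam (r := ρ) (by rwa [abs_of_pos hρ0])).mul_left ρ⁻¹))
    · simp only [hudef]
      match k with
      | 0 =>
        have := binCoef_pos hlam 0
        simp only [Nat.cast_zero, zero_mul, Nat.cast_ofNat, zero_add]
        positivity
      | (k+1) =>
        have hb := binCoef_pos hlam (k+1)
        have h1 : ρ ^ (k + 1 - 1) = ρ⁻¹ * ρ ^ (k+1) := by
          rw [pow_succ]; field_simp; simp
        rw [h1]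
        have h2 : ((k+1 : ℕ) : ℝ) ≤ ((k+1 : ℕ) : ℝ) + 1 := by linarith
        have h3 : (0:ℝ) ≤ ρ ^ (k+1) := by positivity
        push_cast
        nlinarith [mul_nonneg (inv_nonneg.2 hρ0.le) (mul_nonneg hb.le h3)]
  -- the series is differentiable term by term on Ioo (-ρ) ρ
  have hder : ∀ (k : ℕ), ∀ y ∈ Ioo (-ρ) ρ,
      HasDerivAt (fun z => binCoef lam k * z ^ k) (binCoef lam k * ((k:ℝ) * y ^ (k - 1))) y :=
    fun k y _ => (hasDerivAt_pow k y).const_mul _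
  have hbound : ∀ (k : ℕ), ∀ y ∈ Ioo (-ρ) ρ,
      ‖binCoef lam k * ((k:ℝ) * y ^ (k - 1))‖ ≤ u k := by
    intro k y hy
    have hyρ : |y| ≤ ρ := le_of_lt (abs_lt.2 ⟨hy.1, hy.2⟩)
    have hb := binCoef_pos hlam k
    rw [Real.norm_eq_abs, abs_mul, abs_mul, abs_pow, abs_of_pos hb,
      abs_of_nonneg (Nat.cast_nonneg k : (0:ℝ) ≤ (k:ℝ))]
    have hpow : |y| ^ (k-1) ≤ ρ ^ (k-1) := pow_le_pow_left₀ (abs_nonneg y) hyρ _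
    simp only [hudef]
    have h0 : (0:ℝ) ≤ (k:ℝ) := Nat.cast_nonneg k
    nlinarith [mul_le_mul_of_nonneg_left hpow
      (show (0:ℝ) ≤ (k:ℝ) * binCoef lam k by positivity)]
  have h0mem : (0:ℝ) ∈ Ioo (-ρ) ρ := ⟨by linarith, hρ0⟩
  have hg0 : Summable fun k : ℕ => binCoef lam k * (0:ℝ) ^ k := by
    apply summable_of_ne_finset_zero (s := {0})
    intro k hk
    have : k ≠ 0 := by simpa using hk
    simp [zero_pow this]
  have hS' : ∀ y ∈ Ioo (-ρ) ρ,
      HasDerivAt S (∑' k : ℕ, binCoef lam k * ((k:ℝ) * y ^ (k - 1))) y := by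
    intro y hy
    exact hasDerivAt_tsum_of_isPreconnected hu isOpen_Ioo (isPreconnected_Ioo)
      hder hbound h0mem hg0 hy
  -- the ODE : (1-y) * S' y = lam * S y
  have hODE : ∀ y ∈ Ioo (-ρ) ρ,
      (1 - y) * (∑' k : ℕ, binCoef lam k * ((k:ℝ) * y ^ (k - 1))) = lam * S y := by
    intro y hy
    have hyρ : |y| < ρ := abs_lt.2 ⟨hy.1, hy.2⟩
    have hy1 : |y| < 1 := lt_trans hyρ hρ1
    have s1 : Summable fun k : ℕ => binCoef lam k * y ^ k := binCoef_summable hlam hy1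
    have s2 : Summable fun k : ℕ => (k:ℝ) * binCoef lam k * y ^ k := binCoef_summable_mul hlam hy1
    have s3 : Summable fun k : ℕ => (lam + (k:ℝ)) * binCoef lam k * y ^ k := by
      have := (s1.mul_left lam).add s2
      refine this.congr fun k => ?_
      ring
    have sD : Summable fun k : ℕ => binCoef lam k * ((k:ℝ) * y ^ (k - 1)) := by
      apply Summable.of_norm_bounded hu
      intro k
      exact hbound k y hy
    -- rewrite D y as ∑ (lam+k) b_k y^k
    have hD : (∑' k : ℕ, binCoef lam k * ((k:ℝ) * y ^ (k - 1)))
        = ∑' k : ℕ, (lam + (k:ℝ)) * binCoef lam k * y ^ k := by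
      rw [Summable.tsum_eq_zero_add sD]
      simp only [Nat.cast_zero, zero_mul, mul_zero, zero_add]
      congr 1
      funext k
      have h1 : (k + 1 : ℕ) - 1 = k := rfl
      have h2 := binCoef_succ hlam k
      push_cast [h1]
      linear_combination y ^ k * h2
    have hyD : y * (∑' k : ℕ, binCoef lam k * ((k:ℝ) * y ^ (k - 1)))
        = ∑' k : ℕ, (k:ℝ) * binCoef lam k * y ^ k := by
      rw [← tsum_mul_left]
      congr 1
      funext k
      match k with
      | 0 => simp
      | (k+1) =>
        have h1 : (k + 1 : ℕ) - 1 = k := rfl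
        rw [h1]
        push_cast
        ring
    calc (1 - y) * (∑' k : ℕ, binCoef lam k * ((k:ℝ) * y ^ (k - 1)))
        = (∑' k : ℕ, binCoef lam k * ((k:ℝ) * y ^ (k - 1)))
          - y * (∑' k : ℕ, binCoef lam k * ((k:ℝ) * y ^ (k - 1))) := by ring
      _ = (∑' k : ℕ, (lam + (k:ℝ)) * binCoef lam k * y ^ k)
          - (∑' k : ℕ, (k:ℝ) * binCoef lam k * y ^ k) := by rw [hyD, hD]
      _ = ∑' k : ℕ, ((lam + (k:ℝ)) * binCoef lam k * y ^ k
            - (k:ℝ) * binCoef lam k * y ^ k) := (Summable.tsum_sub s3 s2).symm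
      _ = ∑' k : ℕ, lam * (binCoef lam k * y ^ k) := by
            congr 1; funext k; ring
      _ = lam * S y := tsum_mul_left
  -- h := S * (1-·)^lam has zero derivative on Ioo (-ρ) ρ
  have hH : ∀ y ∈ Ioo (-ρ) ρ, HasDerivAt (fun z => S z * (1 - z) ^ lam) 0 y := by
    intro y hy
    have hpos : (0:ℝ) < 1 - y := by have := hy.2; linarith
    have hP : HasDerivAt (fun z : ℝ => (1 - z) ^ lam)
        (lam * (1 - y) ^ (lam - 1) * (-1)) y := by
      have h1 : HasDerivAt (fun z : ℝ => 1 - z) (-1) y := (hasDerivAt_id y).const_sub 1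
      have h2 : HasDerivAt (fun w : ℝ => w ^ lam) (lam * (1 - y) ^ (lam - 1)) (1 - y) :=
        Real.hasDerivAt_rpow_const (Or.inl hpos.ne')
      exact h2.comp y h1
    have hmul := (hS' y hy).mul hP
    refine HasDerivAt.congr_deriv hmul (Eq.symm ?_)
    have hODEy := hODE y hy
    have hsplit : (1 - y) ^ lam = (1 - y) ^ (lam - 1) * (1 - y) := by
      rw [← Real.rpow_add_one hpos.ne' (lam - 1)]
      congr 1
      ring
    rw [hsplit]
    linear_combination (-(1 - y) ^ (lam - 1)) * hODEy
  -- constancy on [min 0 s, max 0 s]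
  set a : ℝ := min 0 s with hadef
  set b : ℝ := max 0 s with hbdef
  have hsub : Icc a b ⊆ Ioo (-ρ) ρ := by
    intro x hx
    have hxa : a ≤ x := hx.1
    have hxb : x ≤ b := hx.2
    have h1 : -|s| ≤ a := le_min (neg_nonpos_of_nonneg (abs_nonneg s)) (neg_abs_le s)
    have h2 : b ≤ |s| := max_le (abs_nonneg s) (le_abs_self s)
    exact ⟨by linarith, by linarith⟩
  have hcont : ContinuousOn (fun z => S z * (1 - z) ^ lam) (Icc a b) :=
    fun x hx => ((hH x (hsub hx)).continuousAt).continuousWithinAt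
  have hconst := constant_of_has_deriv_right_zero hcont
    (fun x hx => ((hH x (hsub (Ico_subset_Icc_self hx))).hasDerivWithinAt))
  have hsmem : s ∈ Icc a b := ⟨min_le_right 0 s, le_max_right 0 s⟩
  have h0mem' : (0:ℝ) ∈ Icc a b := ⟨min_le_left 0 s, le_max_left 0 s⟩
  have heq : S s * (1 - s) ^ lam = S 0 * (1 - 0) ^ lam := by
    rw [hconst s hsmem, hconst 0 h0mem']
  have hS0 : S 0 = 1 := by
    have : S 0 = binCoef lam 0 * (0:ℝ) ^ 0 := by
      apply tsum_eq_single 0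
      intro k hk
      simp [zero_pow hk]
    rw [this, binCoef_zero hlam]
    norm_num
  have h1s : (0:ℝ) < 1 - s := by
    have := abs_lt.1 hs
    linarith [this.2]
  have hXpos : (0:ℝ) < (1 - s) ^ lam := Real.rpow_pos_of_pos h1s lam
  have hSs : S s = (1 - s) ^ (-lam) := by
    rw [Real.rpow_neg h1s.le]
    rw [hS0] at heq
    simp only [sub_zero, Real.one_rpow, mul_one] at heq
    field_simp
    linarith [heq]
  have hsum := (binCoef_summable hlam hs).hasSum
  rwa [show (∑' k : ℕ, binCoef lam k * s ^ k) = S s from rfl, hSs] at hsum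

/-- Rearranged binomial series: expansion of `(1 - (x+y))^(-lam)` grouped by total degree,
where `x` contributes degree 1 and `y` degree 2. -/
theorem binCoef_hasSum_pair {lam : ℝ} (hlam : 0 < lam) {x y : ℝ} (hxy : |x| + |y| < 1) :
    HasSum (fun m : ℕ => ∑ i ∈ Finset.range (m / 2 + 1),
      binCoef lam (m - i) * (((m - i).choose i : ℕ) : ℝ) * x ^ (m - 2 * i) * y ^ i)
      ((1 - (x + y)) ^ (-lam)) := by
  set F : ℕ × ℕ → ℝ := fun p =>
    if p.2 ≤ p.1 then binCoef lam p.1 * ((p.1.choose p.2 : ℕ) : ℝ) * x ^ (p.1 - p.2) * y ^ p.2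
    else 0 with hFdef
  set G : ℕ × ℕ → ℝ := fun p =>
    if p.2 ≤ p.1 then binCoef lam p.1 * ((p.1.choose p.2 : ℕ) : ℝ) * |x| ^ (p.1 - p.2) * |y| ^ p.2
    else 0 with hGdef
  have habs : (0:ℝ) ≤ |x| + |y| := by positivity
  have hxy1 : |x + y| < 1 := lt_of_le_of_lt (abs_add_le x y) hxy
  -- row sums
  have hrowsum : ∀ (a b : ℝ) (k : ℕ),
      ∑ i ∈ Finset.range (k + 1),
        binCoef lam k * ((k.choose i : ℕ) : ℝ) * a ^ (k - i) * b ^ i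
      = binCoef lam k * (a + b) ^ k := by
    intro a b k
    rw [show a + b = b + a from add_comm a b, add_pow, Finset.mul_sum]
    apply Finset.sum_congr rfl
    intro i _
    ring
  have hrowF : ∀ k : ℕ, HasSum (fun i => F (k, i)) (binCoef lam k * (x + y) ^ k) := by
    intro k
    have h1 : ∀ i ∉ Finset.range (k + 1), F (k, i) = 0 := by
      intro i hi
      have : ¬ i ≤ k := by simpa [Nat.lt_succ_iff] using hi
      simp [hFdef, this]
    have h2 := hasSum_sum_of_ne_finset_zero (L := SummationFilter.unconditional _) h1
    convert h2 using 1
    rw [← hrowsum x y k]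
    apply Finset.sum_congr rfl
    intro i hi
    have : i ≤ k := by simpa [Nat.lt_succ_iff] using hi
    simp [hFdef, this]
  have hrowG : ∀ k : ℕ, HasSum (fun i => G (k, i)) (binCoef lam k * (|x| + |y|) ^ k) := by
    intro k
    have h1 : ∀ i ∉ Finset.range (k + 1), G (k, i) = 0 := by
      intro i hi
      have : ¬ i ≤ k := by simpa [Nat.lt_succ_iff] using hi
      simp [hGdef, this]
    have h2 := hasSum_sum_of_ne_finset_zero (L := SummationFilter.unconditional _) h1
    convert h2 using 1
    rw [← hrowsum |x| |y| k]
    apply Finset.sum_congr rfl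
    intro i hi
    have : i ≤ k := by simpa [Nat.lt_succ_iff] using hi
    simp [hGdef, this]
  -- summability of G
  have hGnn : 0 ≤ G := by
    intro p
    simp only [hGdef, Pi.zero_apply]
    split
    · have := binCoef_pos hlam p.1
      positivity
    · exact le_rfl
  have hGsum : Summable G := by
    rw [summable_prod_of_nonneg hGnn]
    constructor
    · exact fun k => (hrowG k).summable
    · have : (fun k => ∑' i : ℕ, G (k, i))
          = fun k => binCoef lam k * (|x| + |y|) ^ k := by
        funext k
        exact (hrowG k).tsum_eq
      rw [this]
      exact binCoef_summable hlam (by rwa [abs_of_nonneg habs])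
  have hFsum : Summable F := by
    apply Summable.of_norm_bounded hGsum
    intro p
    simp only [hFdef, hGdef]
    split
    · rename_i h
      rw [Real.norm_eq_abs, abs_mul, abs_mul, abs_mul, abs_pow, abs_pow,
        abs_of_pos (binCoef_pos hlam p.1), Nat.abs_cast]
    · simp
  -- F sums to the target
  have hFT : HasSum F ((1 - (x + y)) ^ (-lam)) := by
    have h1 := hFsum.hasSum
    have h2 := h1.prod_fiberwise hrowF
    have h3 := binCoef_hasSum hlam hxy1
    rwa [h3.unique h2]
  -- regroup along the injection (k,i) ↦ (k+i, i)
  set G2 : ℕ × ℕ → ℝ := fun q =>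
    if 2 * q.2 ≤ q.1 then
      binCoef lam (q.1 - q.2) * (((q.1 - q.2).choose q.2 : ℕ) : ℝ) * x ^ (q.1 - 2 * q.2) * y ^ q.2
    else 0 with hG2def
  have hphi : Function.Injective (fun p : ℕ × ℕ => (p.1 + p.2, p.2)) := by
    intro p q h
    simp only [Prod.mk.injEq] at h
    obtain ⟨h1, h2⟩ := h
    ext
    · omega
    · exact h2
  have hoff : ∀ q ∉ Set.range (fun p : ℕ × ℕ => (p.1 + p.2, p.2)), G2 q = 0 := by
    intro q hq
    have hlt : ¬ q.2 ≤ q.1 := by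
      intro hle
      exact hq ⟨(q.1 - q.2, q.2), by simp [Nat.sub_add_cancel hle]⟩
    have : ¬ 2 * q.2 ≤ q.1 := by omega
    simp [hG2def, this]
  have hcomp : G2 ∘ (fun p : ℕ × ℕ => (p.1 + p.2, p.2)) = F := by
    funext p
    obtain ⟨k, i⟩ := p
    simp only [Function.comp_apply, hG2def, hFdef]
    by_cases h : i ≤ k
    · have h1 : 2 * i ≤ k + i := by omega
      have h2 : k + i - i = k := by omega
      have h3 : k + i - 2 * i = k - i := by omega
      simp [h1, h2, h3, h]
    · have h1 : ¬ 2 * i ≤ k + i := by omega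
      simp [h1, h]
  have hG2T : HasSum G2 ((1 - (x + y)) ^ (-lam)) := by
    rw [← Function.Injective.hasSum_iff hphi hoff, hcomp]
    exact hFT
  -- fiberwise sums of G2
  have hrowG2 : ∀ m : ℕ, HasSum (fun i => G2 (m, i))
      (∑ i ∈ Finset.range (m / 2 + 1),
        binCoef lam (m - i) * (((m - i).choose i : ℕ) : ℝ) * x ^ (m - 2 * i) * y ^ i) := by
    intro m
    have h1 : ∀ i ∉ Finset.range (m / 2 + 1), G2 (m, i) = 0 := by
      intro i hi
      have : ¬ 2 * i ≤ m := by
        simp only [Finset.mem_range, Nat.lt_succ_iff] at hi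
        omega
      simp [hG2def, this]
    have h2 := hasSum_sum_of_ne_finset_zero (L := SummationFilter.unconditional _) h1
    convert h2 using 1
    apply Finset.sum_congr rfl
    intro i hi
    have : 2 * i ≤ m := by
      simp only [Finset.mem_range, Nat.lt_succ_iff] at hi
      omega
    simp [hG2def, this]
  exact hG2T.prod_fiberwise hrowG2

/-- the majorant coefficients -/
noncomputable def gegMaj (lam : ℝ) (m : ℕ) : ℝ :=
  ∑ i ∈ Finset.range (m / 2 + 1),
    binCoef lam (m - i) * (((m - i).choose i : ℕ) : ℝ) * 2 ^ (m - 2 * i)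

lemma gegenbauer_eq_binCoef {lam : ℝ} (hlam : 0 < lam) (m : ℕ) (u : ℝ) :
    gegenbauer lam m u = ∑ i ∈ Finset.range (m / 2 + 1),
      (-1 : ℝ) ^ i * (binCoef lam (m - i) * (((m - i).choose i : ℕ) : ℝ)) *
        (2 * u) ^ (m - 2 * i) := by
  unfold gegenbauer
  apply Finset.sum_congr rfl
  intro i hi
  have h2i : 2 * i ≤ m := by
    simp only [Finset.mem_range, Nat.lt_succ_iff] at hi
    omega
  congr 2
  -- Γ(lam + m - i) / (Γ lam * i! * (m-2i)!) = binCoef lam (m-i) * choose (m-i) i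
  have hcast : lam + (m : ℝ) - (i : ℝ) = lam + ((m - i : ℕ) : ℝ) := by
    have : ((m - i : ℕ) : ℝ) = (m : ℝ) - (i : ℝ) := by
      have : i ≤ m := by omega
      push_cast [this]
      ring
    rw [this]; ring
  rw [hcast, binCoef]
  have hchoose : ((m - i).choose i) * i.factorial * (m - 2 * i).factorial
      = (m - i).factorial := by
    have h1 : i ≤ m - i := by omega
    have h2 : m - i - i = m - 2 * i := by omega
    rw [← h2]
    exact Nat.choose_mul_factorial_mul_factorial h1
  have hGpos : Real.Gamma lam ≠ 0 := (Real.Gamma_pos_of_pos hlam).ne'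
  have hf1 : ((i.factorial : ℕ) : ℝ) ≠ 0 := by exact_mod_cast i.factorial_pos.ne'
  have hf2 : (((m - 2 * i).factorial : ℕ) : ℝ) ≠ 0 := by
    exact_mod_cast (m - 2 * i).factorial_pos.ne'
  have hf3 : (((m - i).factorial : ℕ) : ℝ) ≠ 0 := by exact_mod_cast (m - i).factorial_pos.ne'
  have hchoose' : (((m - i).choose i : ℕ) : ℝ) * (i.factorial : ℝ) * ((m - 2 * i).factorial : ℝ)
      = ((m - i).factorial : ℝ) := by exact_mod_cast hchoose
  field_simp
  linear_combination -hchoose'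

lemma abs_gegenbauer_le {lam : ℝ} (hlam : 0 < lam) (m : ℕ) {u : ℝ} (hu : |u| ≤ 1) :
    |gegenbauer lam m u| ≤ gegMaj lam m := by
  rw [gegenbauer_eq_binCoef hlam]
  refine le_trans (Finset.abs_sum_le_sum_abs _ _) ?_
  apply Finset.sum_le_sum
  intro i _
  have hb := binCoef_pos hlam (m - i)
  rw [abs_mul, abs_mul, abs_pow, abs_pow, abs_neg, abs_one, one_pow, one_mul, abs_mul,
    abs_of_pos hb, Nat.abs_cast]
  apply mul_le_mul_of_nonneg_left _ (by positivity)
  calc |2 * u| ^ (m - 2 * i) = (2 * |u|) ^ (m - 2 * i) := by rw [abs_mul]; norm_num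
    _ ≤ 2 ^ (m - 2 * i) := by
        apply pow_le_pow_left₀ (by positivity)
        linarith

lemma gegenbauer_hasSum {lam : ℝ} (hlam : 0 < lam) {u t : ℝ} (hu : |u| ≤ 1) (ht : 0 ≤ t)
    (ht1 : 2 * t + t ^ 2 < 1) :
    HasSum (fun m : ℕ => gegenbauer lam m u * t ^ m) ((1 - 2 * u * t + t ^ 2) ^ (-lam)) := by
  have hxy : |2 * u * t| + |(-(t ^ 2))| < 1 := by
    rw [abs_neg, abs_of_nonneg (by positivity : (0:ℝ) ≤ t ^ 2), abs_mul, abs_mul]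
    have : |(2:ℝ)| = 2 := by norm_num
    rw [this, abs_of_nonneg ht]
    nlinarith [abs_nonneg u, mul_le_mul_of_nonneg_right hu ht]
  have h := binCoef_hasSum_pair hlam hxy
  have htarget : (1 - (2 * u * t + -(t ^ 2))) ^ (-lam) = (1 - 2 * u * t + t ^ 2) ^ (-lam) := by
    congr 1; ring
  rw [htarget] at h
  have hm : ∀ m : ℕ, (∑ i ∈ Finset.range (m / 2 + 1),
      binCoef lam (m - i) * (((m - i).choose i : ℕ) : ℝ) * (2 * u * t) ^ (m - 2 * i)
        * (-(t ^ 2)) ^ i) = gegenbauer lam m u * t ^ m := by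
    intro m
    rw [gegenbauer_eq_binCoef hlam, Finset.sum_mul]
    apply Finset.sum_congr rfl
    intro i hi
    have h2i : 2 * i ≤ m := by
      simp only [Finset.mem_range, Nat.lt_succ_iff] at hi
      omega
    have hxpow : (2 * u * t) ^ (m - 2 * i) = (2 * u) ^ (m - 2 * i) * t ^ (m - 2 * i) := by
      rw [mul_pow]
    have hypow : (-(t ^ 2)) ^ i = (-1 : ℝ) ^ i * t ^ (2 * i) := by
      rw [neg_pow, pow_mul]
    have htm : t ^ m = t ^ (m - 2 * i) * t ^ (2 * i) := by
      rw [← pow_add]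
      congr 1
      omega
    rw [hxpow, hypow, htm]
    ring
  have hfun : (fun m : ℕ => ∑ i ∈ Finset.range (m / 2 + 1),
      binCoef lam (m - i) * (((m - i).choose i : ℕ) : ℝ) * (2 * u * t) ^ (m - 2 * i)
        * (-(t ^ 2)) ^ i) = fun m => gegenbauer lam m u * t ^ m := funext hm
  rwa [hfun] at h

lemma gegMaj_hasSum {lam : ℝ} (hlam : 0 < lam) {t : ℝ} (ht : 0 ≤ t)
    (ht1 : 2 * t + t ^ 2 < 1) :
    HasSum (fun m : ℕ => gegMaj lam m * t ^ m) ((1 - 2 * t - t ^ 2) ^ (-lam)) := by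
  have hxy : |2 * t| + |t ^ 2| < 1 := by
    rw [abs_of_nonneg (by positivity : (0:ℝ) ≤ t ^ 2), abs_mul]
    have : |(2:ℝ)| = 2 := by norm_num
    rw [this, abs_of_nonneg ht]
    linarith
  have h := binCoef_hasSum_pair hlam hxy
  have htarget : (1 - (2 * t + t ^ 2)) ^ (-lam) = (1 - 2 * t - t ^ 2) ^ (-lam) := by
    congr 1; ring
  rw [htarget] at h
  have hm : ∀ m : ℕ, (∑ i ∈ Finset.range (m / 2 + 1),
      binCoef lam (m - i) * (((m - i).choose i : ℕ) : ℝ) * (2 * t) ^ (m - 2 * i)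
        * (t ^ 2) ^ i) = gegMaj lam m * t ^ m := by
    intro m
    rw [gegMaj, Finset.sum_mul]
    apply Finset.sum_congr rfl
    intro i hi
    have h2i : 2 * i ≤ m := by
      simp only [Finset.mem_range, Nat.lt_succ_iff] at hi
      omega
    have hxpow : (2 * t) ^ (m - 2 * i) = 2 ^ (m - 2 * i) * t ^ (m - 2 * i) := mul_pow 2 t _
    have hypow : (t ^ 2) ^ i = t ^ (2 * i) := by rw [← pow_mul]
    have htm : t ^ m = t ^ (m - 2 * i) * t ^ (2 * i) := by
      rw [← pow_add]
      congr 1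
      omega
    rw [hxpow, hypow, htm]
    ring
  have hfun : (fun m : ℕ => ∑ i ∈ Finset.range (m / 2 + 1),
      binCoef lam (m - i) * (((m - i).choose i : ℕ) : ℝ) * (2 * t) ^ (m - 2 * i)
        * (t ^ 2) ^ i) = fun m => gegMaj lam m * t ^ m := funext hm
  rwa [hfun] at h

lemma gegMaj_nonneg {lam : ℝ} (hlam : 0 < lam) (m : ℕ) : 0 ≤ gegMaj lam m := by
  apply Finset.sum_nonneg
  intro i _
  have := binCoef_pos hlam (m - i)
  positivity

/-- Core analytic estimate: Taylor remainder of `(1-2ut+t²)^(-lam)` in `t`. -/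
theorem gegenbauer_tail_bound {lam : ℝ} (hlam : 0 < lam) (k : ℕ) :
    ∃ C : ℝ, 0 < C ∧ ∀ u t : ℝ, |u| ≤ 1 → 0 < t → t ≤ 1 / 2 →
      |(1 - 2 * u * t + t ^ 2) ^ (-lam)
        - ∑ j ∈ Finset.range k, gegenbauer lam j u * t ^ j| ≤ C * t ^ k := by
  set M : ℝ := (1 - 2 * (1/5 : ℝ) - (1/5 : ℝ) ^ 2) ^ (-lam) with hMdef
  set A : ℝ := (1/4 : ℝ) ^ (-lam) with hAdef
  set B : ℝ := ∑ j ∈ Finset.range k, gegMaj lam j with hBdef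
  have hMpos : 0 < M := Real.rpow_pos_of_pos (by norm_num) _
  have hApos : 0 < A := Real.rpow_pos_of_pos (by norm_num) _
  have hBnn : 0 ≤ B := Finset.sum_nonneg fun j _ => gegMaj_nonneg hlam j
  refine ⟨5 ^ k * (M + A + B), by positivity, ?_⟩
  intro u t hu ht ht2
  have hM : HasSum (fun m : ℕ => gegMaj lam m * (1/5 : ℝ) ^ m) M := by
    have := gegMaj_hasSum hlam (t := (1/5 : ℝ)) (by norm_num) (by norm_num)
    simpa [hMdef] using this
  by_cases hcase : t ≤ 1/5
  · -- small t : use the series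
    have ht1 : 2 * t + t ^ 2 < 1 := by nlinarith
    have hG := gegenbauer_hasSum hlam hu ht.le ht1
    have hsG := hG.summable
    have hdiff : (1 - 2 * u * t + t ^ 2) ^ (-lam)
        - ∑ j ∈ Finset.range k, gegenbauer lam j u * t ^ j
        = ∑' i : ℕ, gegenbauer lam (i + k) u * t ^ (i + k) := by
      have h1 := Summable.sum_add_tsum_nat_add k hsG
      rw [hG.tsum_eq] at h1
      linarith
    rw [hdiff]
    -- majorant for the tail
    set g : ℕ → ℝ := fun i => gegMaj lam (i + k) * (1/5 : ℝ) ^ (i + k) * (5 ^ k * t ^ k)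
      with hgdef
    have hsM : Summable (fun i : ℕ => gegMaj lam (i + k) * (1/5 : ℝ) ^ (i + k)) :=
      (summable_nat_add_iff (f := fun m : ℕ => gegMaj lam m * (1/5 : ℝ) ^ m) k).2 hM.summable
    have hsg : Summable g := hsM.mul_right _
    have hterm : ∀ i : ℕ, |gegenbauer lam (i + k) u * t ^ (i + k)| ≤ g i := by
      intro i
      rw [abs_mul, abs_pow, abs_of_pos ht]
      have h1 : |gegenbauer lam (i + k) u| ≤ gegMaj lam (i + k) := abs_gegenbauer_le hlam _ hu
      have h2 : t ^ (i + k) ≤ (1/5 : ℝ) ^ i * t ^ k := by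
        rw [pow_add]
        apply mul_le_mul_of_nonneg_right _ (by positivity)
        exact pow_le_pow_left₀ ht.le hcase i
      have h3 : (1/5 : ℝ) ^ (i + k) * (5 ^ k * t ^ k) = (1/5 : ℝ) ^ i * t ^ k := by
        rw [pow_add]
        have : (1/5 : ℝ) ^ k * 5 ^ k = 1 := by
          rw [← mul_pow]; norm_num
        field_simp
        linarith [this]
      simp only [hgdef]
      rw [mul_assoc, h3]
      have h4 : (0:ℝ) ≤ gegMaj lam (i + k) := gegMaj_nonneg hlam _
      calc |gegenbauer lam (i + k) u| * t ^ (i + k)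
          ≤ gegMaj lam (i + k) * t ^ (i + k) := by
            apply mul_le_mul_of_nonneg_right h1 (by positivity)
        _ ≤ gegMaj lam (i + k) * ((1/5 : ℝ) ^ i * t ^ k) :=
            mul_le_mul_of_nonneg_left h2 h4
    have hsabs : Summable (fun i : ℕ => |gegenbauer lam (i + k) u * t ^ (i + k)|) :=
      Summable.of_nonneg_of_le (fun i => abs_nonneg _) hterm hsg
    calc |∑' i : ℕ, gegenbauer lam (i + k) u * t ^ (i + k)|
        ≤ ∑' i : ℕ, |gegenbauer lam (i + k) u * t ^ (i + k)| := by
          exact norm_tsum_le_tsum_norm (f := fun i => gegenbauer lam (i+k) u * t ^ (i+k)) hsabs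
      _ ≤ ∑' i : ℕ, g i := Summable.tsum_le_tsum hterm hsabs hsg
      _ = (∑' i : ℕ, gegMaj lam (i + k) * (1/5 : ℝ) ^ (i + k)) * (5 ^ k * t ^ k) :=
          tsum_mul_right
      _ ≤ M * (5 ^ k * t ^ k) := by
          apply mul_le_mul_of_nonneg_right _ (by positivity)
          have h5 := Summable.sum_add_tsum_nat_add k hM.summable
          rw [hM.tsum_eq] at h5
          have h6 : 0 ≤ ∑ i ∈ Finset.range k, gegMaj lam i * (1/5 : ℝ) ^ i :=
            Finset.sum_nonneg fun i _ => by
              have := gegMaj_nonneg hlam i; positivity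
          linarith
      _ ≤ 5 ^ k * (M + A + B) * t ^ k := by
          have h7 : (0:ℝ) ≤ t ^ k := by positivity
          nlinarith [mul_nonneg (mul_nonneg (by positivity : (0:ℝ) ≤ (5:ℝ)^k)
            (by linarith : (0:ℝ) ≤ A + B)) h7]
  · -- large t : crude bound
    push_neg at hcase
    have hQ : (1/4 : ℝ) ≤ 1 - 2 * u * t + t ^ 2 := by
      have hu1 : u ≤ 1 := le_trans (le_abs_self u) hu
      nlinarith
    have h1 : (1 - 2 * u * t + t ^ 2) ^ (-lam) ≤ A := by
      exact Real.rpow_le_rpow_of_nonpos (by norm_num) hQ (by linarith)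
    have h1' : 0 < (1 - 2 * u * t + t ^ 2) ^ (-lam) :=
      Real.rpow_pos_of_pos (by linarith) _
    have h2 : |∑ j ∈ Finset.range k, gegenbauer lam j u * t ^ j| ≤ B := by
      refine le_trans (Finset.abs_sum_le_sum_abs _ _) ?_
      rw [hBdef]
      apply Finset.sum_le_sum
      intro j _
      rw [abs_mul, abs_pow, abs_of_pos ht]
      have hgj := abs_gegenbauer_le hlam j hu
      have htj : t ^ j ≤ 1 := pow_le_one₀ ht.le (by linarith)
      have h0 : (0:ℝ) ≤ |gegenbauer lam j u| := abs_nonneg _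
      calc |gegenbauer lam j u| * t ^ j ≤ |gegenbauer lam j u| * 1 :=
            mul_le_mul_of_nonneg_left htj h0
        _ = |gegenbauer lam j u| := mul_one _
        _ ≤ gegMaj lam j := hgj
    have h3 : (1:ℝ) ≤ (5 * t) ^ k := by
      calc (1:ℝ) = 1 ^ k := (one_pow k).symm
        _ ≤ (5 * t) ^ k := pow_le_pow_left₀ (by norm_num) (by linarith) k
    have habs : |(1 - 2 * u * t + t ^ 2) ^ (-lam)
        - ∑ j ∈ Finset.range k, gegenbauer lam j u * t ^ j|
        ≤ |(1 - 2 * u * t + t ^ 2) ^ (-lam)|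
          + |∑ j ∈ Finset.range k, gegenbauer lam j u * t ^ j| := by
      rw [sub_eq_add_neg]
      refine le_trans (abs_add_le _ _) ?_
      rw [abs_neg]
    calc |(1 - 2 * u * t + t ^ 2) ^ (-lam)
        - ∑ j ∈ Finset.range k, gegenbauer lam j u * t ^ j|
        ≤ |(1 - 2 * u * t + t ^ 2) ^ (-lam)|
          + |∑ j ∈ Finset.range k, gegenbauer lam j u * t ^ j| := habs
      _ ≤ A + B := by
          rw [abs_of_pos h1']
          exact add_le_add h1 h2
      _ = (A + B) * 1 := (mul_one _).symm
      _ ≤ (A + B) * (5 * t) ^ k := mul_le_mul_of_nonneg_left h3 (by linarith)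
      _ = (A + B) * 5 ^ k * t ^ k := by rw [mul_pow]; ring
      _ ≤ 5 ^ k * (M + A + B) * t ^ k := by
          nlinarith [mul_nonneg (mul_nonneg (by positivity : (0:ℝ) ≤ (5:ℝ) ^ k) hMpos.le)
            (pow_nonneg ht.le k)]

end GegenbauerAux

/-- Growth estimate for the modified double layer kernel: removing the first `k` terms of the
harmonic-polynomial expansion of `x|z-z'|^{-n}` (with `x = z 0`, `z'` in the boundary
hyperplane, `2|z| ≤ |z'|`) improves the decay at infinity in `z'` by `k` orders. -/
theorem modified_double_kernel_estimate (n : ℕ) (hn : 3 ≤ n) (k : ℕ) :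
    ∃ C : ℝ, 0 < C ∧ ∀ z z' : EuclideanSpace ℝ (Fin n), z ≠ 0 →
      z' ⟨0, by omega⟩ = 0 → 2 * ‖z‖ ≤ ‖z'‖ →
      |z ⟨0, by omega⟩ * ‖z - z'‖ ^ (-(n : ℝ)) -
          ∑ m ∈ Finset.Icc 1 k,
            z ⟨0, by omega⟩ * ‖z‖ ^ (m - 1) * ‖z'‖ ^ (-((m : ℝ) + n - 1)) *
              gegenbauer ((n : ℝ) / 2) (m - 1) (⟪z, z'⟫ / (‖z‖ * ‖z'‖))|
        ≤ C * |z ⟨0, by omega⟩| * ‖z‖ ^ k * ‖z'‖ ^ (-((n : ℝ) + k)) := by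
  have hlam : (0:ℝ) < (n : ℝ) / 2 := by
    have : (3:ℝ) ≤ (n:ℝ) := by exact_mod_cast hn
    linarith
  obtain ⟨C, hC, hbound⟩ := gegenbauer_tail_bound hlam k
  refine ⟨C, hC, ?_⟩
  intro z z' hz hz0 h2
  set x : ℝ := z ⟨0, by omega⟩ with hxdef
  set r : ℝ := ‖z‖ with hrdef
  set R : ℝ := ‖z'‖ with hRdef
  have hr : 0 < r := norm_pos_iff.2 hz
  have hR : 0 < R := lt_of_lt_of_le (by linarith) h2
  set t : ℝ := r / R with htdef
  set p : ℝ := ⟪z, z'⟫ with hpdef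
  set u : ℝ := p / (r * R) with hudef
  have ht : 0 < t := div_pos hr hR
  have ht2 : t ≤ 1 / 2 := by
    rw [htdef, div_le_div_iff₀ hR (by norm_num)]
    linarith
  have hu : |u| ≤ 1 := by
    rw [hudef, abs_div, abs_of_pos (mul_pos hr hR), div_le_one (mul_pos hr hR)]
    exact abs_real_inner_le_norm z z'
  have hrt : r = t * R := by
    rw [htdef]; field_simp
  -- positivity of ‖z - z'‖ and of the quadratic form
  have hA : 0 < ‖z - z'‖ := by
    have h1 : R - r ≤ ‖z' - z‖ := norm_sub_norm_le z' z
    have h2' : ‖z' - z‖ = ‖z - z'‖ := norm_sub_rev z' z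
    have : 0 < R - r := by linarith
    linarith [h2' ▸ h1]
  set Q : ℝ := 1 - 2 * u * t + t ^ 2 with hQdef
  have hQR : Q * R ^ 2 = ‖z - z'‖ ^ 2 := by
    have hA2 : ‖z - z'‖ ^ 2 = r ^ 2 - 2 * p + R ^ 2 := norm_sub_sq_real z z'
    rw [hQdef, hA2, hudef, htdef]
    field_simp
    ring
  have hQpos : 0 < Q := by
    have : 0 < ‖z - z'‖ ^ 2 := by positivity
    nlinarith [sq_nonneg R]
  -- key identity 1
  have key1 : ‖z - z'‖ ^ (-(n : ℝ)) = R ^ (-(n:ℝ)) * Q ^ (-((n:ℝ)/2)) := by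
    have e1 : -(n:ℝ) = (2:ℝ) * (-((n:ℝ)/2)) := by ring
    have e2 : ∀ a : ℝ, 0 < a → a ^ (-(n:ℝ)) = (a ^ 2) ^ (-((n:ℝ)/2)) := by
      intro a ha
      rw [e1, Real.rpow_mul ha.le, show ((2:ℝ)) = ((2:ℕ):ℝ) by norm_num,
        Real.rpow_natCast]
    rw [e2 _ hA, ← hQR, Real.mul_rpow hQpos.le (by positivity), e2 R hR]
    ring
  -- key identity 2 : the sum
  have key2 : (∑ m ∈ Finset.Icc 1 k,
        x * r ^ (m - 1) * R ^ (-((m : ℝ) + n - 1)) * gegenbauer ((n : ℝ) / 2) (m - 1) u)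
      = x * R ^ (-(n:ℝ)) * ∑ j ∈ Finset.range k, gegenbauer ((n:ℝ)/2) j u * t ^ j := by
    rw [← Finset.Ico_add_one_right_eq_Icc, Finset.sum_Ico_eq_sum_range]
    rw [Finset.mul_sum]
    apply Finset.sum_congr rfl
    intro i _
    have h1 : 1 + i - 1 = i := by omega
    have e3 : R ^ (i:ℕ) * R ^ (-(((1 + i : ℕ) : ℝ) + n - 1)) = R ^ (-(n:ℝ)) := by
      rw [← Real.rpow_natCast R i, ← Real.rpow_add hR]
      congr 1
      push_cast
      ring
    rw [h1, hrt, mul_pow]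
    calc x * (t ^ i * R ^ i) * R ^ (-(((1 + i : ℕ) : ℝ) + n - 1))
          * gegenbauer ((n:ℝ)/2) i u
        = x * t ^ i * (R ^ (i:ℕ) * R ^ (-(((1 + i : ℕ) : ℝ) + n - 1)))
          * gegenbauer ((n:ℝ)/2) i u := by ring
      _ = x * t ^ i * R ^ (-(n:ℝ)) * gegenbauer ((n:ℝ)/2) i u := by rw [e3]
      _ = x * R ^ (-(n:ℝ)) * (gegenbauer ((n:ℝ)/2) i u * t ^ i) := by ring
  -- RHS identity
  have key3 : C * |x| * r ^ k * R ^ (-((n : ℝ) + k)) = C * t ^ k * (|x| * R ^ (-(n:ℝ))) := by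
    have e4 : R ^ (k:ℕ) * R ^ (-((n:ℝ) + k)) = R ^ (-(n:ℝ)) := by
      rw [← Real.rpow_natCast R k, ← Real.rpow_add hR]
      congr 1
      ring
    rw [hrt, mul_pow]
    calc C * |x| * (t ^ k * R ^ k) * R ^ (-((n:ℝ) + k))
        = C * |x| * t ^ k * (R ^ (k:ℕ) * R ^ (-((n:ℝ) + k))) := by ring
      _ = C * |x| * t ^ k * R ^ (-(n:ℝ)) := by rw [e4]
      _ = C * t ^ k * (|x| * R ^ (-(n:ℝ))) := by ring
  rw [key1, key2, key3]
  have hfac : x * (R ^ (-(n:ℝ)) * Q ^ (-((n:ℝ)/2)))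
      - x * R ^ (-(n:ℝ)) * ∑ j ∈ Finset.range k, gegenbauer ((n:ℝ)/2) j u * t ^ j
      = (x * R ^ (-(n:ℝ))) *
        (Q ^ (-((n:ℝ)/2)) - ∑ j ∈ Finset.range k, gegenbauer ((n:ℝ)/2) j u * t ^ j) := by
    ring
  rw [hfac, abs_mul, abs_mul, abs_of_nonneg (Real.rpow_nonneg hR.le _)]
  have hb := hbound u t hu ht ht2
  calc |x| * R ^ (-(n:ℝ)) *
        |Q ^ (-((n:ℝ)/2)) - ∑ j ∈ Finset.range k, gegenbauer ((n:ℝ)/2) j u * t ^ j|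
      ≤ |x| * R ^ (-(n:ℝ)) * (C * t ^ k) := by
        apply mul_le_mul_of_nonneg_left _ (by positivity)
        simpa [hQdef] using hb
    _ = C * t ^ k * (|x| * R ^ (-(n:ℝ))) := by ring
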